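/- If two simple valuations on a T0 space are distinct as formal linear combinations (with distinct support points and positive coefficients), then they are distinct as functions on the lattice of open sets. -/

import Mathlib

open Set

/-- The specialization order on a topological space: `x ⊑ y` iff `x ∈ closure {y}`. -/
def sOrd (X : Type*) [TopologicalSpace X] (x y : X) : Prop := x ∈ closure {y}

/-- A directed subset `D`, viewed as a net indexed by itself, converges to `x`:
it is eventually in every open neighborhood of `x`. -/
def dconv (X : Type*) [TopologicalSpace X] (D : Set X) (x : X) : Prop :=
  D.Nonempty ∧ DirectedOn (sOrd X) D ∧
    ∀ U : Set X, IsOpen U → x ∈ U → ∃ d ∈ D, ∀ e ∈ D, sOrd X d e → e ∈ U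

/-- A subset `U` is directed open if every directed net converging to a point of `U`
meets `U`. -/
def dOpen (X : Type*) [TopologicalSpace X] (U : Set X) : Prop :=
  ∀ D x, dconv X D x → x ∈ U → (D ∩ U).Nonempty

open scoped ENNReal
open Classical in
/-- The point valuation `η_x`: `η_x U = 1` if `x ∈ U`, else `0`. -/
noncomputable def pv {X : Type*} (x : X) (U : Set X) : ℝ≥0∞ :=
  if x ∈ U then 1 else 0

open Classical in
/-- The simple valuation `Σ_{b ∈ B} r b · η_b`. -/
noncomputable def simpleVal {X : Type*} (B : Finset X) (r : X → ℝ≥0∞) (U : Set X) : ℝ≥0∞ :=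
  ∑ b ∈ B, if b ∈ U then r b else 0

lemma spec_extremal {X : Type*} [TopologicalSpace X] [T0Space X]
    (S : Finset X) (hS : S.Nonempty) :
    ∃ x ∈ S, ∀ y ∈ S, y ⤳ x → y = x := by
  classical
  induction S using Finset.induction with
  | empty => exact absurd hS (by simp)
  | @insert a S ha ih =>
    by_cases hS' : S.Nonempty
    · obtain ⟨x, hx, hmax⟩ := ih hS'
      by_cases hax : a ⤳ x
      · refine ⟨a, Finset.mem_insert_self _ _, fun y hy hya => ?_⟩
        rcases Finset.mem_insert.1 hy with rfl | hy
        · rfl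
        · have := hmax y hy (hya.trans hax)
          subst this
          exact (hya.antisymm hax).eq
      · refine ⟨x, Finset.mem_insert_of_mem hx, fun y hy hyx => ?_⟩
        rcases Finset.mem_insert.1 hy with rfl | hy
        · exact absurd hyx hax
        · exact hmax y hy hyx
    · refine ⟨a, Finset.mem_insert_self _ _, fun y hy _ => ?_⟩
      rcases Finset.mem_insert.1 hy with rfl | hy
      · rfl
      · exact absurd ⟨y, hy⟩ hS'

open Classical in
lemma key {X : Type*} [TopologicalSpace X] [T0Space X] :
    ∀ n (B C : Finset X) (r s : X → ℝ≥0∞), (B ∪ C).card ≤ n →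
    (∀ b ∈ B, 0 < r b ∧ r b ≠ ⊤) → (∀ c ∈ C, 0 < s c ∧ s c ≠ ⊤) →
    (∀ U : Set X, IsOpen U → simpleVal B r U = simpleVal C s U) →
    B = C ∧ ∀ b ∈ B, r b = s b := by
  classical
  intro n
  induction n with
  | zero =>
    intro B C r s hcard _ _ _
    have hB : B = ∅ := Finset.union_eq_empty.mp (Finset.card_eq_zero.mp (Nat.le_zero.mp hcard)) |>.1
    have hC : C = ∅ := Finset.union_eq_empty.mp (Finset.card_eq_zero.mp (Nat.le_zero.mp hcard)) |>.2
    subst hB; subst hC; simp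
  | succ n ih =>
    intro B C r s hcard hr hs h
    by_cases hBC : (B ∪ C).Nonempty
    swap
    · have hB : B = ∅ := Finset.union_eq_empty.mp (Finset.not_nonempty_iff_eq_empty.mp hBC) |>.1
      have hC : C = ∅ := Finset.union_eq_empty.mp (Finset.not_nonempty_iff_eq_empty.mp hBC) |>.2
      subst hB; subst hC; simp
    obtain ⟨x, hxBC, hmax⟩ := spec_extremal _ hBC
    set T := (B ∪ C).erase x with hT
    set U := (closure (↑T : Set X))ᶜ with hU
    have hUopen : IsOpen U := isClosed_closure.isOpen_compl
    have hclT : closure (↑T : Set X) = ⋃ y ∈ T, closure {y} := by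
      conv_lhs => rw [← Set.biUnion_of_singleton (↑T : Set X)]
      exact T.closure_biUnion _
    have hxU : x ∈ U := by
      intro hx
      rw [hclT] at hx
      simp only [Set.mem_iUnion] at hx
      obtain ⟨y, hy, hxy⟩ := hx
      rw [← specializes_iff_mem_closure] at hxy
      exact (Finset.mem_erase.mp hy).1 (hmax y (Finset.mem_of_mem_erase hy) hxy)
    have hyU : ∀ y ∈ T, y ∉ U := fun y hy hyU => hyU (subset_closure hy)
    -- value on U
    have hval : ∀ (D : Finset X) (f : X → ℝ≥0∞), D ⊆ B ∪ C →
        simpleVal D f U = if x ∈ D then f x else 0 := by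
      intro D f hD
      rw [simpleVal]
      refine (Finset.sum_congr rfl ?_).trans (Finset.sum_ite_eq' D x f)
      intro b hb
      by_cases hbx : b = x
      · subst hbx; simp [hxU]
      · have : b ∈ T := Finset.mem_erase.mpr ⟨hbx, hD hb⟩
        simp [hbx, hyU b this]
    have hxkey : x ∈ B ∧ x ∈ C ∧ r x = s x := by
      have := h U hUopen
      rw [hval B r Finset.subset_union_left, hval C s Finset.subset_union_right] at this
      by_cases hxB : x ∈ B <;> by_cases hxC : x ∈ C <;>
        simp [hxB, hxC] at this ⊢
      · exact this
      · exact absurd this.symm (hr x hxB).1.ne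
      · exact absurd this (hs x hxC).1.ne
      · rcases Finset.mem_union.mp hxBC with h' | h' <;> [exact hxB h'; exact hxC h']
    obtain ⟨hxB, hxC, hrs⟩ := hxkey
    have hcard' : (B.erase x ∪ C.erase x).card ≤ n := by
      rw [← Finset.erase_union_distrib, Finset.card_erase_of_mem hxBC]
      omega
    have h' : ∀ V : Set X, IsOpen V →
        simpleVal (B.erase x) r V = simpleVal (C.erase x) s V := by
      intro V hV
      have h1 : simpleVal (B.erase x) r V + (if x ∈ V then r x else 0) = simpleVal B r V :=
        Finset.sum_erase_add B _ hxB
      have h2 : simpleVal (C.erase x) s V + (if x ∈ V then r x else 0) = simpleVal C s V := by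
        rw [hrs]; exact Finset.sum_erase_add C _ hxC
      have ht : (if x ∈ V then r x else 0) ≠ ⊤ := by
        split <;> simp [(hr x hxB).2]
      apply (ENNReal.add_left_inj ht).mp
      rw [h1, h2]; exact h V hV
    obtain ⟨hBC', heq'⟩ := ih (B.erase x) (C.erase x) r s hcard'
      (fun b hb => hr b (Finset.mem_of_mem_erase hb))
      (fun c hc => hs c (Finset.mem_of_mem_erase hc)) h'
    constructor
    · have : insert x (B.erase x) = insert x (C.erase x) := by rw [hBC']
      rwa [Finset.insert_erase hxB, Finset.insert_erase hxC] at this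
    · intro b hb
      by_cases hbx : b = x
      · subst hbx; exact hrs
      · exact heq' b (Finset.mem_erase.mpr ⟨hbx, hb⟩)

/-- If two simple valuations on a T0 space agree as functions on all
open sets, then they are equal as formal linear combinations (same support and same
coefficients); equivalently, distinct combinations give distinct valuations. -/
theorem stmt_11 {X : Type*} [TopologicalSpace X] [T0Space X]
    (B C : Finset X) (r s : X → ℝ≥0∞)
    (hr : ∀ b ∈ B, 0 < r b ∧ r b ≠ ⊤) (hs : ∀ c ∈ C, 0 < s c ∧ s c ≠ ⊤)
    (h : ∀ U : Set X, IsOpen U → simpleVal B r U = simpleVal C s U) :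
    B = C ∧ ∀ b ∈ B, r b = s b := by
  classical
  exact key (B ∪ C).card B C r s le_rfl hr hs h
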